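/- Let T be a nondegenerate finite quadratic form and a ∈ T an element with p^k a = 0 and a² = 2u/p^k mod 2ℤ where gcd(u,p) = 1. Then the map t_a : x ↦ x - (2(x·a)/a²)·a, where 2(x·a)/a² is computed as the integer 2(x·a)·(p^k)/(2u) interpreted via an inverse of u mod p^k, is a well-defined automorphism of T preserving the quadratic form, and t_a is an involution. -/

import Mathlib

open Matrix

/-- The group `ℚ/2ℤ`. -/
abbrev QMod2 : Type := ℚ ⧸ AddSubgroup.zmultiples (2 : ℚ)
/-- The group `ℚ/ℤ`. -/
abbrev QMod1 : Type := ℚ ⧸ AddSubgroup.zmultiples (1 : ℚ)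

/-- The natural isomorphism `2 : ℚ/ℤ → ℚ/2ℤ`, `r ↦ 2r`. -/
def twoHom : QMod1 →+ QMod2 :=
  QuotientAddGroup.map _ _ (AddMonoidHom.mk' (fun r : ℚ => 2 * r) (fun a b => by ring))
    (by
      intro x hx
      obtain ⟨k, hk⟩ := AddSubgroup.mem_zmultiples_iff.mp hx
      refine AddSubgroup.mem_comap.mpr (AddSubgroup.mem_zmultiples_iff.mpr ⟨k, ?_⟩)
      simp only [AddMonoidHom.mk'_apply]
      rw [← hk]
      simp [zsmul_eq_mul]
      ring)

lemma twoHom_mk (r : ℚ) :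
    twoHom (QuotientAddGroup.mk r) = (QuotientAddGroup.mk (2 * r) : QMod2) :=
  QuotientAddGroup.map_mk _ _ _ _ r

lemma qmod1_eq_iff (r s : ℚ) :
    (QuotientAddGroup.mk r : QMod1) = QuotientAddGroup.mk s ↔ ∃ j : ℤ, s - r = j := by
  rw [QuotientAddGroup.eq]
  simp only [AddSubgroup.mem_zmultiples_iff, zsmul_eq_mul, mul_one]
  constructor
  · rintro ⟨j, hj⟩; exact ⟨j, by linarith⟩
  · rintro ⟨j, hj⟩; exact ⟨j, by linarith⟩

lemma qmod1_frac_eq_iff {P : ℤ} (hP : (P : ℚ) ≠ 0) (m m' : ℤ) :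
    (QuotientAddGroup.mk ((m : ℚ) / P) : QMod1) = QuotientAddGroup.mk ((m' : ℚ) / P)
      ↔ P ∣ m' - m := by
  rw [qmod1_eq_iff]
  constructor
  · rintro ⟨j, hj⟩
    refine ⟨j, ?_⟩
    have h : (m' : ℚ) - m = P * j := by field_simp at hj; linarith
    exact_mod_cast h
  · rintro ⟨j, hj⟩
    refine ⟨j, ?_⟩
    have h : (m' : ℚ) - m = P * j := by exact_mod_cast congrArg (Int.cast : ℤ → ℚ) hj
    field_simp
    linarith

lemma twoHom_inj {z : QMod1} (h : twoHom z = 0) : z = 0 := by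
  obtain ⟨r, rfl⟩ := QuotientAddGroup.mk_surjective z
  rw [twoHom_mk, QuotientAddGroup.eq_zero_iff, AddSubgroup.mem_zmultiples_iff] at h
  obtain ⟨j, hj⟩ := h
  rw [QuotientAddGroup.eq_zero_iff, AddSubgroup.mem_zmultiples_iff]
  refine ⟨j, ?_⟩
  simp only [zsmul_eq_mul, mul_one] at hj ⊢
  linarith

theorem stmt13 {L : Type} [AddCommGroup L] [Fintype L]
    (q : L → QMod2) (b : L → L → QMod1)
    (hsymm : ∀ x y : L, b x y = b y x)
    (hbil : ∀ x y z : L, b (x + y) z = b x z + b y z)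
    (hpol : ∀ x y : L, q (x + y) = q x + q y + twoHom (b x y))
    (hhom : ∀ (n : ℤ) (x : L), q (n • x) = n ^ 2 • q x)
    (hnd : ∀ x : L, (∀ y : L, b x y = 0) → x = 0)
    (p : ℕ) (hp : p.Prime) (k : ℕ) (u : ℤ) (hu : Int.gcd u p = 1)
    (a : L) (hord : ((p : ℤ) ^ k) • a = 0)
    (hqa : q a = (QuotientAddGroup.mk ((2 * u : ℚ) / (p : ℚ) ^ k) : QMod2)) :
    ∃ t : L ≃+ L,
      (∀ x : L, q (t x) = q x) ∧
      (∀ x : L, t (t x) = x) ∧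
      (∀ x : L, ∃ c : ℤ, t x = x - c • a ∧
        (QuotientAddGroup.mk ((u * c : ℚ) / (p : ℚ) ^ k) : QMod1) = b x a) := by
  classical
  set P : ℤ := (p : ℤ) ^ k with hPdef
  have hPQ : ((P : ℚ)) ≠ 0 := by
    have := hp.pos
    positivity
  have hPcast : ((P : ℚ)) = (p : ℚ) ^ k := by push_cast [hPdef]; ring
  -- bilinearity in the second variable
  have hbil2 : ∀ x y z : L, b x (y + z) = b x y + b x z := by
    intro x y z
    rw [hsymm, hbil, hsymm y x, hsymm z x]
  -- homs in each variable
  have hzsmul2 : ∀ (n : ℤ) (x y : L), b x (n • y) = n • b x y := by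
    intro n x y
    exact map_zsmul (AddMonoidHom.mk' (fun z => b x z) (fun y z => hbil2 x y z)) n y
  have hzsmul1 : ∀ (n : ℤ) (x y : L), b (n • x) y = n • b x y := by
    intro n x y
    exact map_zsmul (AddMonoidHom.mk' (fun z => b z y) (fun w z => hbil w z y)) n x
  have hb0 : ∀ x : L, b x 0 = 0 := by
    intro x
    have := hzsmul2 0 x 0
    simpa using this
  -- every b x a is killed by P
  have htor : ∀ x : L, P • b x a = 0 := by
    intro x
    rw [← hzsmul2, hord, hb0]
  -- choose representatives
  have hex : ∀ x : L, ∃ m : ℤ, (QuotientAddGroup.mk ((m : ℚ) / P) : QMod1) = b x a := by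
    intro x
    obtain ⟨r, hr⟩ := QuotientAddGroup.mk_surjective (b x a)
    have h := htor x
    rw [← hr, ← QuotientAddGroup.mk_zsmul, QuotientAddGroup.eq_zero_iff,
      AddSubgroup.mem_zmultiples_iff] at h
    obtain ⟨j, hj⟩ := h
    simp only [zsmul_eq_mul, mul_one] at hj
    refine ⟨j, ?_⟩
    rw [← hr]
    congr 1
    rw [hj, mul_comm, mul_div_assoc, div_self hPQ, mul_one]
  choose m hm using hex
  -- inverse of u mod P
  have hcop : IsCoprime u P := by
    refine (Int.isCoprime_iff_gcd_eq_one.mpr hu).pow_right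
  obtain ⟨v, w, hvw⟩ := id hcop
  set c : L → ℤ := fun x => v * m x with hcdef
  have hB : ∀ x : L, (QuotientAddGroup.mk ((u * c x : ℤ) / (P : ℚ)) : QMod1) = b x a := by
    intro x
    have hd : P ∣ (u * c x) - m x := by
      have : (u * c x) - m x = -(w * m x) * P := by
        have h1 : u * v = 1 - w * P := by linarith [hvw]
        simp only [hcdef]
        calc u * (v * m x) - m x = (u * v) * m x - m x := by ring
        _ = (1 - w * P) * m x - m x := by rw [h1]
        _ = -(w * m x) * P := by ring
      exact Dvd.intro_left _ this.symm
    have := (qmod1_frac_eq_iff hPQ (m x) (u * c x)).mpr hd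
    rw [← this, hm x]
  have hC : ∀ c₁ c₂ : ℤ,
      (QuotientAddGroup.mk ((u * c₁ : ℤ) / (P : ℚ)) : QMod1)
        = QuotientAddGroup.mk ((u * c₂ : ℤ) / (P : ℚ)) → c₁ • a = c₂ • a := by
    intro c₁ c₂ h
    have hd : P ∣ u * (c₂ - c₁) := by
      have := (qmod1_frac_eq_iff hPQ (u * c₁) (u * c₂)).mp h
      have he : u * c₂ - u * c₁ = u * (c₂ - c₁) := by ring
      rwa [he] at this
    have hd2 : P ∣ c₂ - c₁ := IsCoprime.dvd_of_dvd_mul_left (IsCoprime.symm hcop) hd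
    obtain ⟨d, hd3⟩ := hd2
    have : c₂ • a = c₁ • a + (P * d) • a := by rw [← hd3]; rw [← add_zsmul]; congr 1; ring
    rw [this, mul_comm, mul_zsmul, hord, smul_zero, add_zero]
  -- the reflection
  set τ : L → L := fun x => x - c x • a with hτdef
  have hτ : ∀ x : L, τ x = x + (-(c x)) • a := by
    intro x; simp [hτdef, sub_eq_add_neg, neg_zsmul]
  have hτadd : ∀ x y : L, τ (x + y) = τ x + τ y := by
    intro x y
    have h1 : (QuotientAddGroup.mk ((u * c (x + y) : ℤ) / (P : ℚ)) : QMod1)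
        = QuotientAddGroup.mk ((u * (c x + c y) : ℤ) / (P : ℚ)) := by
      rw [hB (x + y), hbil]
      rw [← hB x, ← hB y]
      rw [← QuotientAddGroup.mk_add]
      congr 1
      push_cast
      ring
    have h2 := hC _ _ h1
    simp only [hτdef]
    rw [h2, add_zsmul]
    abel
  -- b a a
  have hbaa : b a a = (QuotientAddGroup.mk ((2 * u : ℤ) / (P : ℚ)) : QMod1) := by
    have h1 := hpol a a
    have h2 : a + a = (2 : ℤ) • a := (two_zsmul a).symm
    rw [h2, hhom] at h1
    have hqa' : q a = (QuotientAddGroup.mk ((2 * u : ℤ) / (P : ℚ)) : QMod2) := by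
      rw [hqa]; congr 1; rw [hPcast]; push_cast; ring
    have h3 : twoHom (b a a) = (2 : ℤ) • q a := by
      have : ((2:ℤ)^2 : ℤ) • q a = q a + q a + twoHom (b a a) := h1
      have h4 : ((2:ℤ)^2 : ℤ) • q a = q a + q a + (2:ℤ) • q a := by
        rw [show ((2:ℤ)^2 : ℤ) = 1 + 1 + 2 by norm_num]
        rw [add_zsmul, add_zsmul, one_zsmul]
      rw [h4] at this
      exact (add_left_cancel this).symm
    have h5 : twoHom (b a a - QuotientAddGroup.mk ((2 * u : ℤ) / (P : ℚ))) = 0 := by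
      rw [map_sub, h3, twoHom_mk, hqa']
      rw [← QuotientAddGroup.mk_zsmul]
      rw [sub_eq_zero]
      congr 1
    have h6 := twoHom_inj h5
    rwa [sub_eq_zero] at h6
  have hτb : ∀ x : L, b (τ x) a
      = (QuotientAddGroup.mk ((u * (-(c x)) : ℤ) / (P : ℚ)) : QMod1) := by
    intro x
    rw [hτ x, hsymm, hbil2, hsymm a x, hzsmul2, hbaa, ← hB x,
      ← QuotientAddGroup.mk_zsmul, ← QuotientAddGroup.mk_add]
    congr 1
    push_cast [zsmul_eq_mul]
    field_simp
    ring
  have hinv : ∀ x : L, τ (τ x) = x := by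
    intro x
    have h1 : (QuotientAddGroup.mk ((u * c (τ x) : ℤ) / (P : ℚ)) : QMod1)
        = QuotientAddGroup.mk ((u * (-(c x)) : ℤ) / (P : ℚ)) := by
      rw [hB (τ x), hτb x]
    have h2 := hC _ _ h1
    simp only [hτdef] at h2 ⊢
    rw [h2, neg_zsmul]
    abel
  have hq : ∀ x : L, q (τ x) = q x := by
    intro x
    rw [hτ x, hpol, hhom, hzsmul2, ← hB x, ← QuotientAddGroup.mk_zsmul, twoHom_mk]
    have hqa' : q a = (QuotientAddGroup.mk ((2 * u : ℤ) / (P : ℚ)) : QMod2) := by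
      rw [hqa]; congr 1; rw [hPcast]; push_cast; ring
    rw [hqa', ← QuotientAddGroup.mk_zsmul]
    rw [add_assoc, ← QuotientAddGroup.mk_add]
    have hz : ((-(c x)) ^ 2 • ((2 * u : ℤ) / (P : ℚ) : ℚ)
        + 2 * ((-(c x)) • ((u * c x : ℤ) / (P : ℚ) : ℚ))) = 0 := by
      simp only [zsmul_eq_mul]
      push_cast
      ring
    rw [hz]
    simp
  refine ⟨{ toFun := τ, invFun := τ, left_inv := hinv, right_inv := hinv,
            map_add' := hτadd }, ?_, ?_, ?_⟩
  · intro x; exact hq x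
  · intro x; exact hinv x
  · intro x
    refine ⟨c x, rfl, ?_⟩
    rw [← hB x]
    congr 1
    rw [hPcast]
    push_cast
    ring
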